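/- Let f : [0,∞]^k → [0,∞] be a tropical power series with coefficient vector c : ℕ^k → [0,∞], and fix 0 < ε < ∞. Define F_ε = { n ∈ ℕ^k : c(n) < ∞ and for all m ≺ n, c(m) > c(n) + ε }. Then F_ε is finite. -/

import Mathlib

open scoped ENNReal

/-- The set `F_ε = { n ∈ ℕ^k : c n < ∞ and ∀ m ≺ n, c m > c n + ε }` is finite. -/
theorem F_eps_finite (k : ℕ) (c : (Fin k → ℕ) → ℝ≥0∞) (ε : ℝ≥0∞)
    (hε0 : 0 < ε) (hεtop : ε < ⊤) :
    {n : Fin k → ℕ | c n < ⊤ ∧ ∀ m : Fin k → ℕ, m < n → c n + ε < c m}.Finite := by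
  set S := {n : Fin k → ℕ | c n < ⊤ ∧ ∀ m : Fin k → ℕ, m < n → c n + ε < c m} with hS
  by_contra hinf
  replace hinf : S.Infinite := hinf
  obtain ⟨f, hf⟩ : ∃ f : ℕ → (Fin k → ℕ), Function.Injective f ∧ ∀ n, f n ∈ S := by
    let f := hinf.natEmbedding S
    exact ⟨fun n => (f n : Fin k → ℕ), fun a b h =>
      f.injective (Subtype.ext h), fun n => (f n).2⟩
  obtain ⟨hfinj, hfmem⟩ := hf
  obtain ⟨g, hg⟩ := (Set.isPWO_of_wellQuasiOrderedLE S).exists_monotone_subseq (f := f) hfmem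
  -- strictly increasing chain in S
  set s : ℕ → (Fin k → ℕ) := f ∘ g with hsdef
  have hmono : ∀ i j, i < j → s i < s j := fun i j hij =>
    lt_of_le_of_ne (hg (le_of_lt hij)) fun h => hij.ne (g.injective (hfinj h))
  have key : ∀ j : ℕ, c (s j) + j * ε ≤ c (s 0) := by
    intro j
    induction j with
    | zero => simp
    | succ j ih =>
      have h1 : s j < s (j + 1) := hmono j (j + 1) (Nat.lt_succ_self j)
      have h2 : c (s (j + 1)) + ε < c (s j) := (hfmem (g (j + 1))).2 (s j) h1
      calc c (s (j + 1)) + (↑(j + 1)) * ε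
          = (c (s (j + 1)) + ε) + j * ε := by push_cast; ring
        _ ≤ c (s j) + j * ε := add_le_add_left h2.le _
        _ ≤ c (s 0) := ih
  have h0top : c (s 0) < ⊤ := (hfmem (g 0)).1
  obtain ⟨N, hN⟩ : ∃ N : ℕ, c (s 0) < N * ε := by
    obtain ⟨N, hN⟩ := ENNReal.exists_nat_gt (ENNReal.div_lt_top h0top.ne hε0.ne').ne
    exact ⟨N, (ENNReal.div_lt_iff (Or.inl hε0.ne') (Or.inl hεtop.ne)).mp hN⟩
  have := key N
  have : (N : ℝ≥0∞) * ε ≤ c (s 0) := le_trans (le_add_self) this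
  exact absurd hN (not_lt.mpr this)
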